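/- arXiv:math/0312426 — 9 statements merged into one kernel-verified Lean document; each statement's English description precedes it below -/
import Mathlib

section
/- Let x = (V,c,V,c) ∈ M^τ with V generic. For every r ∈ Z(G) with r² = e, the tuple x_r := (V, c·r, V, c·r) lies in M^τ and lies in the K-orbit of x. Moreover, the map sending r to the K^τ-orbit of x_r is a bijection from {r ∈ Z(G) : r² = e} onto the set of K^τ-orbits of points of M^τ that are contained in the K-orbit of x. In particular, the natural map I : M^τ/K^τ → M/K (sending a K^τ-orbit to the K-orbit containing it) is exactly |{r ∈ Z(G) : r² = e}|-to-one over the class of x. -/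
/-! Model of flat `G`-connections on `Σ_ℓ # RP²` and its orientable double cover
(genus `2ℓ`), following the two-base-point description.  A point of `G^{4ℓ+2}`
is a tuple `(a₁,b₁,…,a_ℓ,b_ℓ,c, ā₁,b̄₁,…,ā_ℓ,b̄_ℓ,c̄)`. -/
structure Pt (G : Type*) (ℓ : ℕ) where
  a : Fin ℓ → G
  b : Fin ℓ → G
  c : G
  a' : Fin ℓ → G
  b' : Fin ℓ → G
  c' : G

variable {G : Type*} [Group G] {ℓ : ℕ}

open scoped commutatorElement

/-- The ordered product of commutators `∏_{i=1}^{ℓ} [aᵢ,bᵢ]`. -/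
def relProd (a b : Fin ℓ → G) : G := (List.ofFn fun i => ⁅a i, b i⁆).prod

/-- Membership in `M`: `∏[aᵢ,bᵢ] = c·c̄` and `∏[āᵢ,b̄ᵢ] = c̄·c`. -/
def inM (x : Pt G ℓ) : Prop :=
  relProd x.a x.b = x.c * x.c' ∧ relProd x.a' x.b' = x.c' * x.c

/-- The action of `K = G × G` on tuples. -/
def act (g : G × G) (x : Pt G ℓ) : Pt G ℓ where
  a := fun i => g.1 * x.a i * g.1⁻¹
  b := fun i => g.1 * x.b i * g.1⁻¹
  c := g.1 * x.c * g.2⁻¹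
  a' := fun i => g.2 * x.a' i * g.2⁻¹
  b' := fun i => g.2 * x.b' i * g.2⁻¹
  c' := g.2 * x.c' * g.1⁻¹

/-- The involution `τ(V,c,V̄,c̄) = (V̄,c̄,V,c)`. -/
def tauPt (x : Pt G ℓ) : Pt G ℓ := ⟨x.a', x.b', x.c', x.a, x.b, x.c⟩

/-- Membership in `M^τ`: a point of `M` of the form `(V,c,V,c)`. -/
def inMtau (x : Pt G ℓ) : Prop := inM x ∧ x.a' = x.a ∧ x.b' = x.b ∧ x.c' = x.c

/-- `V = (a₁,b₁,…,a_ℓ,b_ℓ)` is generic if every `g` commuting with all `aᵢ, bᵢ`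
is central. -/
def Generic (a b : Fin ℓ → G) : Prop :=
  ∀ g : G, (∀ i, g * a i = a i * g) → (∀ i, g * b i = b i * g) →
    g ∈ Subgroup.center G

/-- Membership in `N_r = {(V,c,V,c·r) : ∏[aᵢ,bᵢ] = c²·r}`. -/
def inN (r : G) (x : Pt G ℓ) : Prop :=
  x.a' = x.a ∧ x.b' = x.b ∧ x.c' = x.c * r ∧ relProd x.a x.b = x.c ^ 2 * r

/-- for `x = (V,c,V,c) ∈ M^τ` with `V` generic, `r ↦` the
`K^τ`-orbit of `x_r = (V,c·r,V,c·r)` is a bijection from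
`{r ∈ Z(G) : r² = e}` onto the `K^τ`-orbits inside the `K`-orbit of `x`. -/
theorem statement0 (hℓ : 1 ≤ ℓ) (a b : Fin ℓ → G) (c : G)
    (hx : inM (⟨a, b, c, a, b, c⟩ : Pt G ℓ)) (hgen : Generic a b) :
    -- each `x_r` lies in `M^τ` and in the `K`-orbit of `x`
    (∀ r ∈ Subgroup.center G, r ^ 2 = 1 →
      inMtau (⟨a, b, c * r, a, b, c * r⟩ : Pt G ℓ) ∧
      ∃ k : G × G, act k (⟨a, b, c, a, b, c⟩ : Pt G ℓ)
        = ⟨a, b, c * r, a, b, c * r⟩) ∧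
    -- the assignment `r ↦ [x_r]` is injective on `{r ∈ Z(G) : r² = e}`
    (∀ r₁ ∈ Subgroup.center G, ∀ r₂ ∈ Subgroup.center G,
      r₁ ^ 2 = 1 → r₂ ^ 2 = 1 →
      (∃ h : G, act (h, h) (⟨a, b, c * r₁, a, b, c * r₁⟩ : Pt G ℓ)
        = ⟨a, b, c * r₂, a, b, c * r₂⟩) → r₁ = r₂) ∧
    -- and surjective: every point of `M^τ` in the `K`-orbit of `x` lies in the
    -- `K^τ`-orbit of some `x_r`
    (∀ y : Pt G ℓ, inMtau y →
      (∃ k : G × G, act k (⟨a, b, c, a, b, c⟩ : Pt G ℓ) = y) →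
      ∃ r ∈ Subgroup.center G, r ^ 2 = 1 ∧
        ∃ h : G, act (h, h) (⟨a, b, c * r, a, b, c * r⟩ : Pt G ℓ) = y) := by

  obtain ⟨hrel, -⟩ := hx
  refine ⟨?_, ?_, ?_⟩
  · -- each x_r in M^τ and in K-orbit
    intro r hr hr2
    rw [Subgroup.mem_center_iff] at hr
    have hrinv : r⁻¹ = r := inv_eq_of_mul_eq_one_right (by rw [← pow_two]; exact hr2)
    have hme : relProd a b = (c * r) * (c * r) := by
      calc relProd a b = c * c := hrel
        _ = c * c * (r * r) := by rw [← pow_two r, hr2, mul_one]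
        _ = c * (r * c) * r := by rw [← hr c]; group
        _ = (c * r) * (c * r) := by group
    refine ⟨⟨⟨hme, hme⟩, rfl, rfl, rfl⟩, (1, r), ?_⟩
    simp only [act, Pt.mk.injEq]
    refine ⟨by funext i; group, by funext i; group, by rw [hrinv]; group,
      by funext i; rw [← hr (a i)]; group, by funext i; rw [← hr (b i)]; group,
      by rw [← hr c]; group⟩
  · -- injectivity
    rintro r₁ hr₁ r₂ hr₂ h1 h2 ⟨h, heq⟩
    have ha := congrArg Pt.a heq
    have hb := congrArg Pt.b heq
    have hc := congrArg Pt.c heq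
    simp only [act] at ha hb hc
    have hcen : h ∈ Subgroup.center G := by
      refine hgen h (fun i => ?_) (fun i => ?_)
      · have := congrFun ha i
        calc h * a i = h * a i * h⁻¹ * h := by group
          _ = a i * h := by rw [this]
      · have := congrFun hb i
        calc h * b i = h * b i * h⁻¹ * h := by group
          _ = b i * h := by rw [this]
    rw [Subgroup.mem_center_iff] at hcen
    have : c * r₁ = c * r₂ := by
      calc c * r₁ = h * (c * r₁) * h⁻¹ := by rw [← hcen (c * r₁)]; group
        _ = c * r₂ := hc
    exact mul_left_cancel this
  · -- surjectivity
    rintro y ⟨-, hya, hyb, hyc⟩ ⟨⟨g₁, g₂⟩, heq⟩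
    have ha := congrArg Pt.a heq
    have hb := congrArg Pt.b heq
    have hc := congrArg Pt.c heq
    have ha' := congrArg Pt.a' heq
    have hb' := congrArg Pt.b' heq
    have hc' := congrArg Pt.c' heq
    simp only [act] at ha hb hc ha' hb' hc'
    set z := g₂⁻¹ * g₁ with hz
    have hzc : z ∈ Subgroup.center G := by
      refine hgen z (fun i => ?_) (fun i => ?_)
      · have h1 := congrFun ha i
        have h2 := congrFun ha' i
        rw [hya] at h2
        have : g₁ * a i * g₁⁻¹ = g₂ * a i * g₂⁻¹ := by rw [h1, ← h2]
        calc z * a i = g₂⁻¹ * (g₁ * a i * g₁⁻¹) * g₁ := by rw [hz]; group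
          _ = g₂⁻¹ * (g₂ * a i * g₂⁻¹) * g₁ := by rw [this]
          _ = a i * z := by rw [hz]; group
      · have h1 := congrFun hb i
        have h2 := congrFun hb' i
        rw [hyb] at h2
        have : g₁ * b i * g₁⁻¹ = g₂ * b i * g₂⁻¹ := by rw [h1, ← h2]
        calc z * b i = g₂⁻¹ * (g₁ * b i * g₁⁻¹) * g₁ := by rw [hz]; group
          _ = g₂⁻¹ * (g₂ * b i * g₂⁻¹) * g₁ := by rw [this]
          _ = b i * z := by rw [hz]; group
    have hzcomm := Subgroup.mem_center_iff.mp hzc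
    have hg1 : g₁ = g₂ * z := by rw [hz]; group
    have hceq : g₁ * c * g₂⁻¹ = g₂ * c * g₁⁻¹ := by rw [hc, ← hyc, hc']
    have hz2 : z ^ 2 = 1 := by
      have : g₂ * (z * c) * g₂⁻¹ = g₂ * (c * z⁻¹) * g₂⁻¹ := by
        calc g₂ * (z * c) * g₂⁻¹ = g₁ * c * g₂⁻¹ := by rw [hg1]; group
          _ = g₂ * c * g₁⁻¹ := hceq
          _ = g₂ * (c * z⁻¹) * g₂⁻¹ := by rw [hg1]; group
      rw [mul_assoc g₂ (z * c) g₂⁻¹, mul_assoc g₂ (c * z⁻¹) g₂⁻¹] at this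
      have h3 : z * c = c * z⁻¹ := mul_right_cancel (mul_left_cancel this)
      have h4 : c * z = c * z⁻¹ := by rw [hzcomm c, h3]
      have h5 : z = z⁻¹ := mul_left_cancel h4
      rw [pow_two]; nth_rewrite 1 [h5]; exact inv_mul_cancel z
    refine ⟨z, hzc, hz2, g₁, ?_⟩
    have hcz : g₁ * (c * z) * g₁⁻¹ = y.c := by
      calc g₁ * (c * z) * g₁⁻¹ = g₁ * c * g₂⁻¹ := by
            rw [hg1]; group
        _ = y.c := hc
    cases y with
    | mk ya yb yc ya' yb' yc' =>
      simp only [act, Pt.mk.injEq]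
      simp only at ha hb hc ha' hb' hc' hya hyb hyc hcz
      exact ⟨ha, hb, hcz, by rw [hya, ← ha], by rw [hyb, ← hb], by rw [hyc, ← hcz]⟩
end

section
/- Let x = (V,d,c,V,d,c) ∈ M^τ with (V,d) generic. For every r ∈ Z(G) with r² = e, the tuple x_r := (V, d, c·r, V, d, c·r) lies in M^τ and lies in the K-orbit of x. Moreover, the map sending r to the K^τ-orbit of x_r is a bijection from {r ∈ Z(G) : r² = e} onto the set of K^τ-orbits of points of M^τ that are contained in the K-orbit of x. In particular, the natural map I : M^τ/K^τ → M/K (sending a K^τ-orbit to the K-orbit containing it) is exactly |{r ∈ Z(G) : r² = e}|-to-one over the class of x. -/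
/-! Model of flat `G`-connections on `Σ_ℓ # Klein bottle` and its orientable
double cover (genus `2ℓ+1`), in the two-base-point description.  A point of
`G^{4ℓ+4}` is a tuple `(a₁,b₁,…,a_ℓ,b_ℓ,d,c, ā₁,b̄₁,…,ā_ℓ,b̄_ℓ,d̄,c̄)`. -/
structure PtK (G : Type*) (ℓ : ℕ) where
  a : Fin ℓ → G
  b : Fin ℓ → G
  d : G
  c : G
  a' : Fin ℓ → G
  b' : Fin ℓ → G
  d' : G
  c' : G

variable {G : Type*} [Group G] {ℓ : ℕ}

open scoped commutatorElement

/-- Membership in `M`: `∏[aᵢ,bᵢ] = c·d̄·c⁻¹·d` and `∏[āᵢ,b̄ᵢ] = c̄·d·c̄⁻¹·d̄`. -/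
def inMK (x : PtK G ℓ) : Prop :=
  relProd x.a x.b = x.c * x.d' * x.c⁻¹ * x.d ∧
  relProd x.a' x.b' = x.c' * x.d * x.c'⁻¹ * x.d'

/-- The action of `K = G × G` on tuples. -/
def actK (g : G × G) (x : PtK G ℓ) : PtK G ℓ where
  a := fun i => g.1 * x.a i * g.1⁻¹
  b := fun i => g.1 * x.b i * g.1⁻¹
  d := g.1 * x.d * g.1⁻¹
  c := g.1 * x.c * g.2⁻¹
  a' := fun i => g.2 * x.a' i * g.2⁻¹
  b' := fun i => g.2 * x.b' i * g.2⁻¹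
  d' := g.2 * x.d' * g.2⁻¹
  c' := g.2 * x.c' * g.1⁻¹

/-- The involution `τ(V,d,c,V̄,d̄,c̄) = (V̄,d̄,c̄,V,d,c)`. -/
def tauK (x : PtK G ℓ) : PtK G ℓ := ⟨x.a', x.b', x.d', x.c', x.a, x.b, x.d, x.c⟩

/-- Membership in `M^τ`: a point of `M` of the form `(V,d,c,V,d,c)`. -/
def inMtauK (x : PtK G ℓ) : Prop :=
  inMK x ∧ x.a' = x.a ∧ x.b' = x.b ∧ x.d' = x.d ∧ x.c' = x.c

/-- `(V,d)` is generic if every `g` commuting with `d` and with all `aᵢ, bᵢ`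
is central. -/
def GenericK (a b : Fin ℓ → G) (d : G) : Prop :=
  ∀ g : G, g * d = d * g → (∀ i, g * a i = a i * g) →
    (∀ i, g * b i = b i * g) → g ∈ Subgroup.center G

/-- for `x = (V,d,c,V,d,c) ∈ M^τ` with `(V,d)` generic, `r ↦` the
`K^τ`-orbit of `x_r = (V,d,c·r,V,d,c·r)` is a bijection from
`{r ∈ Z(G) : r² = e}` onto the `K^τ`-orbits inside the `K`-orbit of `x`. -/
theorem statement1 (hℓ : 1 ≤ ℓ) (a b : Fin ℓ → G) (d c : G)
    (hx : inMK (⟨a, b, d, c, a, b, d, c⟩ : PtK G ℓ)) (hgen : GenericK a b d) :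
    -- each `x_r` lies in `M^τ` and in the `K`-orbit of `x`
    (∀ r ∈ Subgroup.center G, r ^ 2 = 1 →
      inMtauK (⟨a, b, d, c * r, a, b, d, c * r⟩ : PtK G ℓ) ∧
      ∃ k : G × G, actK k (⟨a, b, d, c, a, b, d, c⟩ : PtK G ℓ)
        = ⟨a, b, d, c * r, a, b, d, c * r⟩) ∧
    -- the assignment `r ↦ [x_r]` is injective on `{r ∈ Z(G) : r² = e}`
    (∀ r₁ ∈ Subgroup.center G, ∀ r₂ ∈ Subgroup.center G,
      r₁ ^ 2 = 1 → r₂ ^ 2 = 1 →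
      (∃ h : G, actK (h, h) (⟨a, b, d, c * r₁, a, b, d, c * r₁⟩ : PtK G ℓ)
        = ⟨a, b, d, c * r₂, a, b, d, c * r₂⟩) → r₁ = r₂) ∧
    -- and surjective: every point of `M^τ` in the `K`-orbit of `x` lies in the
    -- `K^τ`-orbit of some `x_r`
    (∀ y : PtK G ℓ, inMtauK y →
      (∃ k : G × G, actK k (⟨a, b, d, c, a, b, d, c⟩ : PtK G ℓ) = y) →
      ∃ r ∈ Subgroup.center G, r ^ 2 = 1 ∧
        ∃ h : G, actK (h, h) (⟨a, b, d, c * r, a, b, d, c * r⟩ : PtK G ℓ) = y) := by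
  refine ⟨?_, ?_, ?_⟩
  · intro r hrz hr2
    have hr := Subgroup.mem_center_iff.mp hrz
    have hrinv : r⁻¹ = r := by
      have : r * r = 1 := by rw [← sq]; exact hr2
      exact inv_eq_of_mul_eq_one_right this
    constructor
    · refine ⟨⟨?_, ?_⟩, rfl, rfl, rfl, rfl⟩ <;>
      · show relProd a b = c * r * d * (c * r)⁻¹ * d
        rw [hx.1, mul_inv_rev]
        have : r * d * r⁻¹ = d := by rw [← hr d]; group
        calc c * d * c⁻¹ * d = c * (r * d * r⁻¹) * c⁻¹ * d := by rw [this]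
          _ = c * r * d * (r⁻¹ * c⁻¹) * d := by group
    · refine ⟨(1, r⁻¹), ?_⟩
      simp only [actK, PtK.mk.injEq, hrinv]
      refine ⟨funext fun i => by group, funext fun i => by group, by group, by group,
        funext fun i => ?_, funext fun i => ?_, ?_, ?_⟩
      · rw [← hr (a i), mul_assoc, ← sq, hr2, mul_one]
      · rw [← hr (b i), mul_assoc, ← sq, hr2, mul_one]
      · rw [← hr d, mul_assoc, ← sq, hr2, mul_one]
      · rw [hr c]; group
  · rintro r₁ hr₁z r₂ hr₂z hr₁2 hr₂2 ⟨h, heq⟩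
    simp only [actK, PtK.mk.injEq] at heq
    obtain ⟨ha, hb, hd, hc, -⟩ := heq
    have hhd : h * d = d * h := by
      rw [mul_inv_eq_iff_eq_mul] at hd; exact hd
    have hha : ∀ i, h * a i = a i * h := by
      intro i
      have := congrFun ha i
      rw [mul_inv_eq_iff_eq_mul] at this; exact this
    have hhb : ∀ i, h * b i = b i * h := by
      intro i
      have := congrFun hb i
      rw [mul_inv_eq_iff_eq_mul] at this; exact this
    have hhz := Subgroup.mem_center_iff.mp (hgen h hhd hha hhb)
    have hcc : c * r₂ = c * r₁ := by
      rw [← hc, ← hhz (c * r₁)]; group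
    exact (mul_left_cancel hcc).symm
  · rintro ⟨ya, yb, yd, yc, ya', yb', yd', yc'⟩ ⟨-, hya, hyb, hyd, hyc⟩ ⟨⟨g₁, g₂⟩, heq⟩
    simp only [actK, PtK.mk.injEq] at heq
    obtain ⟨Ea, Eb, Ed, Ec, Ea', Eb', Ed', Ec'⟩ := heq
    simp only at hya hyb hyd hyc
    set h : G := g₂⁻¹ * g₁ with hh
    have conj : ∀ z : G, g₁ * z * g₁⁻¹ = g₂ * z * g₂⁻¹ → h * z = z * h := by
      intro z hz
      have : h * z * h⁻¹ = z := by
        calc h * z * h⁻¹ = g₂⁻¹ * (g₁ * z * g₁⁻¹) * g₂ := by rw [hh]; group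
          _ = g₂⁻¹ * (g₂ * z * g₂⁻¹) * g₂ := by rw [hz]
          _ = z := by group
      rw [mul_inv_eq_iff_eq_mul] at this; exact this
    have hhd : h * d = d * h := conj d (by rw [Ed, ← hyd, ← Ed'])
    have hha : ∀ i, h * a i = a i * h := fun i =>
      conj (a i) (by rw [congrFun Ea i, ← hya, ← congrFun Ea' i])
    have hhb : ∀ i, h * b i = b i * h := fun i =>
      conj (b i) (by rw [congrFun Eb i, ← hyb, ← congrFun Eb' i])
    have hcen := hgen h hhd hha hhb
    have hz := Subgroup.mem_center_iff.mp hcen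
    have hg₁ : g₁ = g₂ * h := by rw [hh]; group
    have hsq : h * h = 1 := by
      have e0 : g₂ * c * (g₂ * h)⁻¹ = (g₂ * h) * c * g₂⁻¹ := by
        rw [← hg₁, Ec', Ec]; exact hyc
      have h5 : g₂ * c * h⁻¹ * g₂⁻¹ = g₂ * c * h * g₂⁻¹ := by
        calc g₂ * c * h⁻¹ * g₂⁻¹ = g₂ * c * (g₂ * h)⁻¹ := by group
          _ = (g₂ * h) * c * g₂⁻¹ := e0
          _ = g₂ * (h * c) * g₂⁻¹ := by group
          _ = g₂ * (c * h) * g₂⁻¹ := by rw [← hz c]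
          _ = g₂ * c * h * g₂⁻¹ := by group
      have h4 : h⁻¹ = h := mul_left_cancel (mul_right_cancel h5)
      calc h * h = h * h⁻¹ := by rw [h4]
        _ = 1 := by group
    have hr2 : h ^ 2 = 1 := by rw [sq]; exact hsq
    refine ⟨h, hcen, hr2, g₂, ?_⟩
    have hch : g₂ * (c * h) * g₂⁻¹ = yc := by
      rw [← Ec, hg₁, hz c]; group
    simp only [actK, PtK.mk.injEq]
    exact ⟨funext fun i => (congrFun Ea' i).trans (congrFun hya i),
      funext fun i => (congrFun Eb' i).trans (congrFun hyb i),
      Ed'.trans hyd, hch, Ea', Eb', Ed', hch.trans hyc.symm⟩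
end

section
/- Assume that the only r ∈ Z(G) with r² = e is r = e (which holds when Z(G) is finite of odd order). Let x = (V,c,V,c) ∈ M^τ with V generic and let x̄ ∈ M^τ. If x and x̄ lie in the same K-orbit, then they lie in the same K^τ-orbit; that is, the natural map I : M^τ/K^τ → M/K is injective at the class of x. -/
variable {G : Type*} [Group G] {ℓ : ℕ}

open scoped commutatorElement

/-- if the only `r ∈ Z(G)` with `r² = e` is `r = e`, then the
natural map `I : M^τ/K^τ → M/K` is injective at the class of any generic
`x = (V,c,V,c) ∈ M^τ`: any `x̄ ∈ M^τ` in the `K`-orbit of `x` is already in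
its `K^τ`-orbit. -/
theorem statement3 (hℓ : 1 ≤ ℓ)
    (h2 : ∀ r ∈ Subgroup.center G, r ^ 2 = 1 → r = 1)
    (x : Pt G ℓ) (hx : inMtau x) (hgen : Generic x.a x.b)
    (y : Pt G ℓ) (hy : inMtau y)
    (horb : ∃ k : G × G, act k x = y) :
    ∃ h : G, act (h, h) x = y := by
  obtain ⟨⟨g1, g2⟩, hk⟩ := horb
  obtain ⟨_, hxa, hxb, hxc⟩ := hx
  obtain ⟨_, hya, hyb, hyc⟩ := hy
  subst hk
  -- component equalities from τ-invariance of y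
  have ha : ∀ i, g2 * x.a i * g2⁻¹ = g1 * x.a i * g1⁻¹ := by
    intro i
    have := congrFun hya i
    simpa [act, hxa] using this
  have hb : ∀ i, g2 * x.b i * g2⁻¹ = g1 * x.b i * g1⁻¹ := by
    intro i
    have := congrFun hyb i
    simpa [act, hxb] using this
  have hc : g2 * x.c * g1⁻¹ = g1 * x.c * g2⁻¹ := by
    simpa [act, hxc] using hyc
  set z := g2⁻¹ * g1 with hz
  have hza : ∀ i, z * x.a i = x.a i * z := by
    intro i
    have := ha i
    rw [hz]
    calc g2⁻¹ * g1 * x.a i = g2⁻¹ * (g1 * x.a i * g1⁻¹) * g1 := by group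
      _ = g2⁻¹ * (g2 * x.a i * g2⁻¹) * g1 := by rw [this]
      _ = x.a i * (g2⁻¹ * g1) := by group

  have hzb : ∀ i, z * x.b i = x.b i * z := by
    intro i
    have := hb i
    rw [hz]
    calc g2⁻¹ * g1 * x.b i = g2⁻¹ * (g1 * x.b i * g1⁻¹) * g1 := by group
      _ = g2⁻¹ * (g2 * x.b i * g2⁻¹) * g1 := by rw [this]
      _ = x.b i * (g2⁻¹ * g1) := by group
  have hzc : z ∈ Subgroup.center G := hgen z hza hzb
  have hcomm : ∀ w : G, z * w = w * z := fun w =>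
    (Subgroup.mem_center_iff.mp hzc w).symm
  -- from hc : g2 c g1⁻¹ = g1 c g2⁻¹, with g1 = g2 z
  have hg1 : g1 = g2 * z := by rw [hz]; group
  have hz2 : z ^ 2 = 1 := by
    have h1 : x.c * z⁻¹ = z * x.c := by
      have h := hc
      rw [hg1] at h
      have key : g2 * (x.c * z⁻¹) * g2⁻¹ = g2 * (z * x.c) * g2⁻¹ := by
        calc g2 * (x.c * z⁻¹) * g2⁻¹ = g2 * x.c * (g2 * z)⁻¹ := by group
          _ = g2 * z * x.c * g2⁻¹ := h
          _ = g2 * (z * x.c) * g2⁻¹ := by group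
      exact mul_left_cancel (mul_right_cancel key)
    have hcc : x.c * z⁻¹ = x.c * z := by rw [h1, hcomm]
    have hiz : z⁻¹ = z := mul_left_cancel hcc
    rw [pow_two]
    nth_rewrite 1 [← hiz]
    exact inv_mul_cancel z
  have hz1 : z = 1 := h2 z hzc hz2
  have hge : g1 = g2 := by rw [hg1, hz1, mul_one]
  exact ⟨g1, by rw [show ((g1 : G), g1) = (g1, g2) by rw [hge]]⟩
end

section
/- Let x = (V,c,V,c) ∈ M^τ with V generic, let x̄ = (V̄,c̄,V̄,c̄) ∈ M^τ, and suppose (g₁,g₂) ∈ K satisfies (g₁,g₂)·x = x̄. Then r := g₁⁻¹g₂ lies in Z(G) and satisfies r² = e. Moreover, there exists h ∈ G with (h,h)·x = x̄ if and only if r = e. -/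
open scoped commutatorElement

variable {G : Type*} [Group G] {ℓ : ℕ}

/-- if `(g₁,g₂)·x = x̄` with `x = (V,c,V,c)`, `x̄ = (V̄,c̄,V̄,c̄)`
in `M^τ` and `V` generic, then `r = g₁⁻¹g₂` is central with `r² = e`, and `x̄`
is in the `K^τ`-orbit of `x` iff `r = e`. -/
theorem statement4 (hℓ : 1 ≤ ℓ) (a b : Fin ℓ → G) (c : G)
    (hx : inM (⟨a, b, c, a, b, c⟩ : Pt G ℓ)) (hgen : Generic a b)
    (a₀ b₀ : Fin ℓ → G) (c₀ : G)
    (hy : inM (⟨a₀, b₀, c₀, a₀, b₀, c₀⟩ : Pt G ℓ))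
    (g₁ g₂ : G)
    (hk : act (g₁, g₂) (⟨a, b, c, a, b, c⟩ : Pt G ℓ)
      = ⟨a₀, b₀, c₀, a₀, b₀, c₀⟩) :
    g₁⁻¹ * g₂ ∈ Subgroup.center G ∧ (g₁⁻¹ * g₂) ^ 2 = 1 ∧
    ((∃ h : G, act (h, h) (⟨a, b, c, a, b, c⟩ : Pt G ℓ)
        = ⟨a₀, b₀, c₀, a₀, b₀, c₀⟩) ↔ g₁⁻¹ * g₂ = 1) := by
  simp only [act, Pt.mk.injEq] at hk
  obtain ⟨ha1, hb1, hc1, ha2, hb2, hc2⟩ := hk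
  -- z = g₂⁻¹ g₁ is central
  have hz : g₂⁻¹ * g₁ ∈ Subgroup.center G := by
    apply hgen
    · intro i
      have e1 := congrFun ha1 i
      have e2 := congrFun ha2 i
      have : g₁ * a i * g₁⁻¹ = g₂ * a i * g₂⁻¹ := by rw [e1, e2]
      have := congrArg (fun t => g₂⁻¹ * t * g₁) this
      simpa [mul_assoc] using this
    · intro i
      have e1 := congrFun hb1 i
      have e2 := congrFun hb2 i
      have : g₁ * b i * g₁⁻¹ = g₂ * b i * g₂⁻¹ := by rw [e1, e2]
      have := congrArg (fun t => g₂⁻¹ * t * g₁) this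
      simpa [mul_assoc] using this
  have hzc := Subgroup.mem_center_iff.mp hz
  have hr : g₁⁻¹ * g₂ ∈ Subgroup.center G := by
    have := (Subgroup.center G).inv_mem hz
    simpa using this
  -- r² = 1
  have hcc : g₁ * c * g₂⁻¹ = g₂ * c * g₁⁻¹ := by rw [hc1, hc2]
  have hz2 : (g₂⁻¹ * g₁) * c * (g₂⁻¹ * g₁) = c := by
    have := congrArg (fun t => g₂⁻¹ * t * g₁) hcc
    simpa [mul_assoc] using this
  have hzsq : (g₂⁻¹ * g₁) ^ 2 = 1 := by
    have : (g₂⁻¹ * g₁) * ((g₂⁻¹ * g₁) * c) = c := by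
      rw [← hzc c]; simpa [mul_assoc] using hz2
    have h1 : (g₂⁻¹ * g₁) * (g₂⁻¹ * g₁) = 1 := by
      have := mul_right_cancel (a := (g₂⁻¹ * g₁) * (g₂⁻¹ * g₁)) (b := c) (c := 1)
        (by simpa [mul_assoc] using this)
      exact this
    simpa [pow_two] using h1
  have hrsq : (g₁⁻¹ * g₂) ^ 2 = 1 := by
    have : ((g₂⁻¹ * g₁)⁻¹) ^ 2 = 1 := by rw [inv_pow, hzsq, inv_one]
    simpa using this
  refine ⟨hr, hrsq, ?_, ?_⟩
  · rintro ⟨h, hh⟩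
    simp only [act, Pt.mk.injEq] at hh
    obtain ⟨hha, hhb, hhc, -, -, -⟩ := hh
    -- w = g₁⁻¹ h central
    have hw : g₁⁻¹ * h ∈ Subgroup.center G := by
      apply hgen
      · intro i
        have e1 := congrFun hha i
        have e2 := congrFun ha1 i
        have : h * a i * h⁻¹ = g₁ * a i * g₁⁻¹ := by rw [e1, e2]
        have := congrArg (fun t => g₁⁻¹ * t * h) this
        simpa [mul_assoc] using this
      · intro i
        have e1 := congrFun hhb i
        have e2 := congrFun hb1 i
        have : h * b i * h⁻¹ = g₁ * b i * g₁⁻¹ := by rw [e1, e2]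
        have := congrArg (fun t => g₁⁻¹ * t * h) this
        simpa [mul_assoc] using this
    have hwc := Subgroup.mem_center_iff.mp hw
    have hcEq : h * c * h⁻¹ = g₁ * c * g₂⁻¹ := by rw [hhc, hc1]
    have hform : h * c * h⁻¹ = g₁ * c * g₁⁻¹ := by
      have h1 : h = g₁ * (g₁⁻¹ * h) := by group
      calc h * c * h⁻¹ = g₁ * ((g₁⁻¹ * h) * c) * h⁻¹ := by
            rw [← mul_assoc, ← h1]
        _ = g₁ * (c * (g₁⁻¹ * h)) * h⁻¹ := by rw [hwc c]
        _ = g₁ * c * g₁⁻¹ := by group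
    have : g₁ * c * g₂⁻¹ = g₁ * c * g₁⁻¹ := by rw [← hcEq, hform]
    have hg : g₂⁻¹ = g₁⁻¹ := by
      exact mul_left_cancel (a := g₁ * c) (by simpa [mul_assoc] using this)
    have : g₂ = g₁ := by
      have := congrArg (·⁻¹) hg; simpa using this
    simp [this]
  · intro hr1
    have hg : g₂ = g₁ := by
      have : g₂ = g₁ * (g₁⁻¹ * g₂) := by group
      rw [hr1, mul_one] at this; exact this
    refine ⟨g₁, ?_⟩
    simp only [act, Pt.mk.injEq]
    subst hg
    exact ⟨ha1, hb1, hc1, ha2, hb2, hc2⟩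
end

section
/- Let x = (V,c,V̄,c̄) ∈ M with V generic, and suppose (g₁,g₂) ∈ K satisfies (g₁,g₂)·x = τ(x). Then r := (g₂g₁)⁻¹ lies in Z(G), and (e,g₁⁻¹)·x = (V, c·g₁, V, c·g₁·r); this point lies in N_r, so the K-orbit of x meets N_r. -/
open scoped commutatorElement

variable {G : Type*} [Group G] {ℓ : ℕ}

/-- if `x = (V,c,V̄,c̄) ∈ M` with `V` generic and
`(g₁,g₂)·x = τ(x)`, then `r = (g₂g₁)⁻¹` is central,
`(e,g₁⁻¹)·x = (V, c·g₁, V, c·g₁·r)`, this point lies in `N_r`, and hence the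
`K`-orbit of `x` meets `N_r`. -/
theorem statement5 (hℓ : 1 ≤ ℓ) (x : Pt G ℓ) (hx : inM x)
    (hgen : Generic x.a x.b)
    (g₁ g₂ : G) (hk : act (g₁, g₂) x = tauPt x) :
    (g₂ * g₁)⁻¹ ∈ Subgroup.center G ∧
    act ((1 : G), g₁⁻¹) x
      = ⟨x.a, x.b, x.c * g₁, x.a, x.b, x.c * g₁ * (g₂ * g₁)⁻¹⟩ ∧
    inN ((g₂ * g₁)⁻¹) (act ((1 : G), g₁⁻¹) x) ∧
    ∃ k : G × G, inN ((g₂ * g₁)⁻¹) (act k x) := by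
  have ha : ∀ i, g₁ * x.a i * g₁⁻¹ = x.a' i := fun i => congrFun (congrArg Pt.a hk) i
  have hb : ∀ i, g₁ * x.b i * g₁⁻¹ = x.b' i := fun i => congrFun (congrArg Pt.b hk) i
  have hc : g₁ * x.c * g₂⁻¹ = x.c' := congrArg Pt.c hk
  have ha' : ∀ i, g₂ * x.a' i * g₂⁻¹ = x.a i := fun i => congrFun (congrArg Pt.a' hk) i
  have hb' : ∀ i, g₂ * x.b' i * g₂⁻¹ = x.b i := fun i => congrFun (congrArg Pt.b' hk) i
  have hc' : g₂ * x.c' * g₁⁻¹ = x.c := congrArg Pt.c' hk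
  have hz : g₂ * g₁ ∈ Subgroup.center G := by
    apply hgen
    · intro i
      calc g₂ * g₁ * x.a i = g₂ * (g₁ * x.a i * g₁⁻¹) * g₁ := by group
        _ = g₂ * x.a' i * g₂⁻¹ * (g₂ * g₁) := by rw [ha i]; group
        _ = x.a i * (g₂ * g₁) := by rw [ha' i]
    · intro i
      calc g₂ * g₁ * x.b i = g₂ * (g₁ * x.b i * g₁⁻¹) * g₁ := by group
        _ = g₂ * x.b' i * g₂⁻¹ * (g₂ * g₁) := by rw [hb i]; group
        _ = x.b i * (g₂ * g₁) := by rw [hb' i]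
  have hzi : (g₂ * g₁)⁻¹ ∈ Subgroup.center G := Subgroup.inv_mem _ hz
  have heq : act ((1 : G), g₁⁻¹) x
      = ⟨x.a, x.b, x.c * g₁, x.a, x.b, x.c * g₁ * (g₂ * g₁)⁻¹⟩ := by
    simp only [act]
    congr 1
    · funext i; group
    · funext i; group
    · group
    · funext i; rw [← ha i]; group
    · funext i; rw [← hb i]; group
    · rw [← hc]; group
  refine ⟨hzi, heq, ?_, ?_⟩
  · rw [heq]
    refine ⟨rfl, rfl, rfl, ?_⟩
    show relProd x.a x.b = (x.c * g₁) ^ 2 * (g₂ * g₁)⁻¹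
    rw [hx.1, ← hc, pow_two]; group
  · exact ⟨((1 : G), g₁⁻¹), by
      rw [heq]
      refine ⟨rfl, rfl, rfl, ?_⟩
      show relProd x.a x.b = (x.c * g₁) ^ 2 * (g₂ * g₁)⁻¹
      rw [hx.1, ← hc, pow_two]; group⟩
end

section
/- Let r ∈ Z(G) and let x = (V,c,V,c·r) ∈ N_r with V generic. If there exists (g₁,g₂) ∈ K with (g₁,g₂)·x ∈ N_e (i.e. (g₁,g₂)·x is of the form (W,c',W,c')), then there exists s ∈ Z(G) with s²·r = e; in particular r ∈ 2Z(G). Equivalently, if r ∉ 2Z(G), then the K-orbit of x does not meet N_e. -/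
variable {G : Type*} [Group G] {ℓ : ℕ}

open scoped commutatorElement

/-- if `x = (V,c,V,c·r) ∈ N_r` with `V` generic and some
`(g₁,g₂) ∈ K` moves `x` into `N_e`, then `s²·r = e` for some central `s`;
in particular `r ∈ 2Z(G)`. -/
theorem statement7 (hℓ : 1 ≤ ℓ) (r : G) (hr : r ∈ Subgroup.center G)
    (a b : Fin ℓ → G) (c : G)
    (hx : inN r (⟨a, b, c, a, b, c * r⟩ : Pt G ℓ)) (hgen : Generic a b)
    (k : G × G) (hk : inN (1 : G) (act k (⟨a, b, c, a, b, c * r⟩ : Pt G ℓ))) :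
    (∃ s ∈ Subgroup.center G, s ^ 2 * r = 1) ∧
    ∃ t ∈ Subgroup.center G, t ^ 2 = r := by
  obtain ⟨ha, hb, hc, -⟩ := hk
  set s := k.1⁻¹ * k.2 with hs_def
  have hsa : ∀ i, s * a i = a i * s := by
    intro i
    have h := congrFun ha i
    simp only [act] at h
    have h1 : k.1⁻¹ * (k.2 * a i * k.2⁻¹) * k.2 = k.1⁻¹ * (k.1 * a i * k.1⁻¹) * k.2 := by
      rw [h]
    simpa [hs_def, mul_assoc] using h1
  have hsb : ∀ i, s * b i = b i * s := by
    intro i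
    have h := congrFun hb i
    simp only [act] at h
    have h1 : k.1⁻¹ * (k.2 * b i * k.2⁻¹) * k.2 = k.1⁻¹ * (k.1 * b i * k.1⁻¹) * k.2 := by
      rw [h]
    simpa [hs_def, mul_assoc] using h1
  have hsc : s ∈ Subgroup.center G := hgen s hsa hsb
  have hcomm : ∀ g : G, s * g = g * s := fun g =>
    (Subgroup.mem_center_iff.mp hsc g).symm
  simp only [act] at hc
  -- hc : k.2 * (c * r) * k.1⁻¹ = k.1 * c * k.2⁻¹ * 1
  have key : s * (c * r) = c * s⁻¹ := by
    have h1 : k.1⁻¹ * (k.2 * (c * r) * k.1⁻¹) * k.1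
        = k.1⁻¹ * (k.1 * c * k.2⁻¹ * 1) * k.1 := by rw [hc]
    simpa [hs_def, mul_inv_rev, mul_assoc] using h1
  have key2 : c * (s * r) = c * s⁻¹ := by
    calc c * (s * r) = s * (c * r) := by rw [← mul_assoc, ← hcomm c, mul_assoc]
    _ = c * s⁻¹ := key
  have hsr : s * r = s⁻¹ := mul_left_cancel key2
  have hsq : s ^ 2 * r = 1 := by
    have : s * (s * r) = s * s⁻¹ := by rw [hsr]
    simpa [pow_two, mul_assoc] using this
  refine ⟨⟨s, hsc, hsq⟩, ⟨s⁻¹, Subgroup.inv_mem _ hsc, ?_⟩⟩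
  have : r = (s ^ 2)⁻¹ := eq_inv_of_mul_eq_one_right hsq
  rw [this]
  group
end

section
/- Let x = (V,d,c,V̄,d̄,c̄) ∈ M with (V,d) generic, and suppose (g₁,g₂) ∈ K satisfies (g₁,g₂)·x = τ(x). Then r := (g₂g₁)⁻¹ lies in Z(G), and (e,g₁⁻¹)·x = (V, d, c·g₁, V, d, c·g₁·r). In particular the K-orbit of x contains a point of the form (V, d, c', V, d, c'·r) with r ∈ Z(G). -/
open scoped commutatorElement

variable {G : Type*} [Group G] {ℓ : ℕ}

/-- if `x = (V,d,c,V̄,d̄,c̄) ∈ M` with `(V,d)` generic and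
`(g₁,g₂)·x = τ(x)`, then `r = (g₂g₁)⁻¹` is central and
`(e,g₁⁻¹)·x = (V, d, c·g₁, V, d, c·g₁·r)`; in particular the `K`-orbit of `x`
contains a point of the form `(V, d, c', V, d, c'·r)` with `r` central. -/
theorem statement9 (hℓ : 1 ≤ ℓ) (x : PtK G ℓ) (hx : inMK x)
    (hgen : GenericK x.a x.b x.d)
    (g₁ g₂ : G) (hk : actK (g₁, g₂) x = tauK x) :
    (g₂ * g₁)⁻¹ ∈ Subgroup.center G ∧
    actK ((1 : G), g₁⁻¹) x
      = ⟨x.a, x.b, x.d, x.c * g₁, x.a, x.b, x.d, x.c * g₁ * (g₂ * g₁)⁻¹⟩ ∧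
    ∃ r ∈ Subgroup.center G, ∃ c' : G, ∃ k : G × G,
      actK k x = ⟨x.a, x.b, x.d, c', x.a, x.b, x.d, c' * r⟩ := by
  have ha : ∀ i, g₁ * x.a i * g₁⁻¹ = x.a' i := fun i => congrFun (congrArg PtK.a hk) i
  have hb : ∀ i, g₁ * x.b i * g₁⁻¹ = x.b' i := fun i => congrFun (congrArg PtK.b hk) i
  have hd : g₁ * x.d * g₁⁻¹ = x.d' := congrArg PtK.d hk
  have ha' : ∀ i, g₂ * x.a' i * g₂⁻¹ = x.a i := fun i => congrFun (congrArg PtK.a' hk) i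
  have hb' : ∀ i, g₂ * x.b' i * g₂⁻¹ = x.b i := fun i => congrFun (congrArg PtK.b' hk) i
  have hd' : g₂ * x.d' * g₂⁻¹ = x.d := congrArg PtK.d' hk
  have hc' : g₂ * x.c' * g₁⁻¹ = x.c := congrArg PtK.c' hk
  have hz : g₂ * g₁ ∈ Subgroup.center G := by
    apply hgen
    · have h := hd'; rw [← hd] at h
      calc (g₂ * g₁) * x.d = (g₂ * (g₁ * x.d * g₁⁻¹) * g₂⁻¹) * (g₂ * g₁) := by group
        _ = x.d * (g₂ * g₁) := by rw [h]
    · intro i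
      have h := ha' i; rw [← ha i] at h
      calc (g₂ * g₁) * x.a i = (g₂ * (g₁ * x.a i * g₁⁻¹) * g₂⁻¹) * (g₂ * g₁) := by group
        _ = x.a i * (g₂ * g₁) := by rw [h]
    · intro i
      have h := hb' i; rw [← hb i] at h
      calc (g₂ * g₁) * x.b i = (g₂ * (g₁ * x.b i * g₁⁻¹) * g₂⁻¹) * (g₂ * g₁) := by group
        _ = x.b i * (g₂ * g₁) := by rw [h]
  have hr : (g₂ * g₁)⁻¹ ∈ Subgroup.center G := inv_mem hz
  have hcomm := Subgroup.mem_center_iff.mp hr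
  have hact : actK ((1 : G), g₁⁻¹) x
      = ⟨x.a, x.b, x.d, x.c * g₁, x.a, x.b, x.d, x.c * g₁ * (g₂ * g₁)⁻¹⟩ := by
    simp only [actK, PtK.mk.injEq]
    refine ⟨funext fun i => by group, funext fun i => by group, by group, by group,
      funext fun i => by rw [← ha i]; group, funext fun i => by rw [← hb i]; group,
      by rw [← hd]; group, ?_⟩
    have hc'' : x.c' = g₂⁻¹ * x.c * g₁ := by
      rw [← hc']; group
    rw [hc'', hcomm (x.c * g₁)]
    group
  exact ⟨hr, hact, (g₂ * g₁)⁻¹, hr, x.c * g₁, (1, g₁⁻¹), hact⟩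
end

section
/- Let r ∈ Z(G) and let x = (V,d,c,V,d,c·r) ∈ M with (V,d) generic. If there exists (g₁,g₂) ∈ K such that (g₁,g₂)·x lies in M^τ (i.e. is of the form (W,d',c',W,d',c')), then there exists s ∈ Z(G) with s²·r = e; in particular r ∈ 2Z(G) := {s² : s ∈ Z(G)}. -/
variable {G : Type*} [Group G] {ℓ : ℕ}

open scoped commutatorElement

/-- if `x = (V,d,c,V,d,c·r) ∈ M` with `r` central and `(V,d)`
generic, and some `(g₁,g₂) ∈ K` moves `x` into `M^τ`, then `s²·r = e` for some
central `s`; in particular `r ∈ 2Z(G)`. -/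
theorem statement10 (hℓ : 1 ≤ ℓ) (r : G) (hr : r ∈ Subgroup.center G)
    (a b : Fin ℓ → G) (d c : G)
    (hx : inMK (⟨a, b, d, c, a, b, d, c * r⟩ : PtK G ℓ))
    (hgen : GenericK a b d)
    (k : G × G)
    (hk : inMtauK (actK k (⟨a, b, d, c, a, b, d, c * r⟩ : PtK G ℓ))) :
    (∃ s ∈ Subgroup.center G, s ^ 2 * r = 1) ∧
    ∃ t ∈ Subgroup.center G, t ^ 2 = r := by
  obtain ⟨hM, ha, hb, hd, hc⟩ := hk
  simp only [actK] at ha hb hd hc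
  -- ha : (fun i => k.2 * a i * k.2⁻¹) = fun i => k.1 * a i * k.1⁻¹, etc.
  have key : ∀ x : G, k.2 * x * k.2⁻¹ = k.1 * x * k.1⁻¹ →
      (k.1⁻¹ * k.2) * x = x * (k.1⁻¹ * k.2) := by
    intro x hxx
    have h2 : k.1⁻¹ * (k.2 * x * k.2⁻¹) * k.2 = k.1⁻¹ * (k.1 * x * k.1⁻¹) * k.2 := by
      rw [hxx]
    group at h2 ⊢
    simpa [mul_assoc] using h2
  have hs : (k.1⁻¹ * k.2) ∈ Subgroup.center G := by
    refine hgen _ (key _ hd) (fun i => key _ ?_) (fun i => key _ ?_)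
    · exact congrFun ha i
    · exact congrFun hb i
  have hsc : ∀ x : G, (k.1⁻¹ * k.2) * x = x * (k.1⁻¹ * k.2) :=
    fun x => (Subgroup.mem_center_iff.mp hs x).symm
  set s : G := k.1⁻¹ * k.2 with hsdef
  -- hc : k.2 * (c * r) * k.1⁻¹ = k.1 * c * k.2⁻¹
  have hr' : r = s⁻¹ * s⁻¹ := by
    have h2 : k.2⁻¹ * (k.2 * (c * r) * k.1⁻¹) * k.1 = k.2⁻¹ * (k.1 * c * k.2⁻¹) * k.1 := by
      rw [hc]
    have h3 : c * r = s⁻¹ * c * s⁻¹ := by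
      have : s⁻¹ = k.2⁻¹ * k.1 := by rw [hsdef]; group
      rw [this]
      group at h2 ⊢
      simpa [mul_assoc] using h2
    have h4 : c * r = c * (s⁻¹ * s⁻¹) := by
      rw [h3]
      have := (hsc c⁻¹)
      have hcs : s⁻¹ * c = c * s⁻¹ := by
        have h5 := hsc c
        calc s⁻¹ * c = s⁻¹ * c * s * s⁻¹ := by group
          _ = s⁻¹ * (s * c) * s⁻¹ := by rw [h5]; group
          _ = c * s⁻¹ := by group
      rw [hcs, mul_assoc]
    exact mul_left_cancel h4
  constructor
  · refine ⟨s, hs, ?_⟩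
    rw [hr', pow_two]; group
  · refine ⟨s⁻¹, (Subgroup.center G).inv_mem hs, ?_⟩
    rw [hr', pow_two]
end

section
/- Let a₁,b₁,…,a_ℓ,b_ℓ, c ∈ G and suppose that k := (∏_{i=1}^{ℓ}[aᵢ,bᵢ])·c² lies in the center Z(G). Then ∏_{i=1}^{ℓ}[aᵢ,bᵢ] · ∏_{j=1}^{ℓ}[c⁻¹·b_{ℓ+1-j}·c, c⁻¹·a_{ℓ+1-j}·c] = e. (This is the computation showing that the lifting to SU(2n) of a flat PSU(2n)-connection on Σ_ℓ # RP², viewed on the orientable double cover, has trivial product of commutators, hence degree 0.) -/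
open scoped commutatorElement

private lemma ofFn_rev_aux {α : Type*} {n : ℕ} (f : Fin n → α) :
    List.ofFn (fun i => f i.rev) = (List.ofFn f).reverse := by
  apply List.ext_getElem
  · simp
  · intro i h1 h2
    simp only [List.getElem_ofFn, List.getElem_reverse, List.length_ofFn] at *
    congr 1
    ext
    simp [Fin.rev]
    omega

private lemma conj_ofFn_prod {G : Type*} [Group G] (c : G) :
    ∀ {n : ℕ} (g : Fin n → G),
      (List.ofFn fun j => c⁻¹ * g j * c).prod = c⁻¹ * (List.ofFn g).prod * c
  | 0, g => by simp
  | n + 1, g => by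
    rw [List.ofFn_succ, List.ofFn_succ, List.prod_cons, List.prod_cons,
      conj_ofFn_prod c (fun i => g i.succ)]
    group

/-- if `k = (∏[aᵢ,bᵢ])·c²` is central, then
`∏_{i=1}^{ℓ}[aᵢ,bᵢ] · ∏_{j=1}^{ℓ}[c⁻¹b_{ℓ+1-j}c, c⁻¹a_{ℓ+1-j}c] = e`.
(The lift of a flat `PSU(2n)`-connection on `Σ_ℓ # RP²` to the orientable
double cover has trivial product of commutators, hence degree `0`.) -/
theorem statement16 {G : Type*} [Group G] {ℓ : ℕ} (hℓ : 1 ≤ ℓ)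
    (a b : Fin ℓ → G) (c : G)
    (hk : ((List.ofFn fun i => ⁅a i, b i⁆).prod) * c ^ 2 ∈ Subgroup.center G) :
    (List.ofFn fun i => ⁅a i, b i⁆).prod *
      (List.ofFn fun j =>
        ⁅c⁻¹ * b j.rev * c, c⁻¹ * a j.rev * c⁆).prod = 1 := by
  set P := (List.ofFn fun i => ⁅a i, b i⁆).prod with hP
  -- c commutes with P
  have hcomm := (Subgroup.mem_center_iff.mp hk) c
  have hcP : c * P = P * c := by
    have : c * P * c ^ 2 = P * c * c ^ 2 := by
      rw [mul_assoc, hcomm]; group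
    exact mul_right_cancel this
  -- rewrite second product
  have h1 : (fun j : Fin ℓ => ⁅c⁻¹ * b j.rev * c, c⁻¹ * a j.rev * c⁆)
      = fun j : Fin ℓ => c⁻¹ * ⁅b j.rev, a j.rev⁆ * c := by
    funext j
    simp only [commutatorElement_def]
    group
  have h3 : (List.ofFn fun j : Fin ℓ => ⁅b j.rev, a j.rev⁆).prod = P⁻¹ := by
    have h4 : (List.ofFn fun j : Fin ℓ => ⁅b j.rev, a j.rev⁆)
        = (List.ofFn fun i : Fin ℓ => ⁅b i, a i⁆).reverse :=
      ofFn_rev_aux (fun i : Fin ℓ => ⁅b i, a i⁆)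
    have h5 : (List.ofFn fun i : Fin ℓ => ⁅b i, a i⁆)
        = (List.ofFn fun i : Fin ℓ => ⁅a i, b i⁆).map Inv.inv := by
      rw [List.map_ofFn]
      congr 1
      funext i
      simp [commutatorElement_inv]
    rw [h4, h5, ← List.prod_inv_reverse, hP]
  have key : (List.ofFn fun j : Fin ℓ =>
      ⁅c⁻¹ * b j.rev * c, c⁻¹ * a j.rev * c⁆).prod = c⁻¹ * P⁻¹ * c := by
    rw [h1, conj_ofFn_prod, h3]
  have hinv : P⁻¹ * c⁻¹ = c⁻¹ * P⁻¹ := by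
    have h := congrArg (·⁻¹) hcP
    simpa [mul_inv_rev] using h
  rw [key, ← mul_assoc, ← mul_assoc, mul_assoc P c⁻¹ P⁻¹, ← hinv]
  group
end
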